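/- arXiv:2406.15762 — 3 statements merged into one kernel-verified Lean document; each statement's English description precedes it below -/
import Mathlib

section
/- Fix D ∈ ℕ, λ ∈ ℝ, and τ₀ ∈ ℝ. Let r : ℝ × ℝ^D → ℝ be C¹ with r(τ, ·) strictly positive for every τ, let u : ℝ × ℝ^D → ℝ^D be C¹ such that there is a compact set K ⊆ ℝ^D with u(τ, x) = 0 for all τ and all x ∉ K, and let p̂ : ℝ^D → ℝ be C¹ and strictly positive. Assume the continuity equation ∂r/∂τ(τ, x) = −div_x( r(τ, ·)·u(τ, ·) )(x) holds for all (τ, x); assume for each τ in a neighborhood of τ₀ that x ↦ r(τ,x)·(log p̂(x) + λ·log r(τ,x)) is Lebesgue integrable and that its pointwise τ-derivative is dominated, uniformly for τ near τ₀, by a fixed integrable function of x; and assume x ↦ r(τ₀,x)·(⟨u(τ₀,x), ∇ log p̂(x)⟩ − λ·div_x u(τ₀, x)) is integrable. Then F(τ) := ∫_{ℝ^D} r(τ,x)·(log p̂(x) + λ·log r(τ,x)) dx is differentiable at τ₀ with F′(τ₀) = ∫_{ℝ^D} r(τ₀,x)·( ⟨u(τ₀,x), ∇ log p̂(x)⟩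 − λ·div_x u(τ₀,x) ) dx. -/
open MeasureTheory Real RealInnerProductSpace

/-- Divergence of a vector field on `ℝ^D`: the trace of its Fréchet derivative,
written as a sum of partial derivatives of coordinates. -/
noncomputable def divg {D : ℕ}
    (F : EuclideanSpace ℝ (Fin D) → EuclideanSpace ℝ (Fin D))
    (x : EuclideanSpace ℝ (Fin D)) : ℝ :=
  ∑ i, fderiv ℝ F x (EuclideanSpace.single i 1) i

lemma clm_decomp {D : ℕ} (L : (EuclideanSpace ℝ (Fin D)) →L[ℝ] ℝ) (v : EuclideanSpace ℝ (Fin D)) :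
    L v = ∑ i, v i * L (EuclideanSpace.single i 1) := by
  have : v = ∑ i, v i • EuclideanSpace.single i (1:ℝ) := by
    ext j
    rw [WithLp.ofLp_sum, Finset.sum_apply]
    simp [EuclideanSpace.single_apply, PiLp.smul_apply]
  conv_lhs => rw [this]
  simp [Finset.mul_sum]

lemma divg_smul {D : ℕ} (c : EuclideanSpace ℝ (Fin D) → ℝ)
    (V : EuclideanSpace ℝ (Fin D) → EuclideanSpace ℝ (Fin D))
    (x : EuclideanSpace ℝ (Fin D)) (hc : DifferentiableAt ℝ c x) (hV : DifferentiableAt ℝ V x) :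
    divg (fun y => c y • V y) x = c x * divg V x + fderiv ℝ c x (V x) := by
  unfold divg
  rw [fderiv_fun_smul hc hV]
  have : ∀ i : Fin D, ((c x • fderiv ℝ V x + (fderiv ℝ c x).smulRight (V x))
      (EuclideanSpace.single i 1)) i
      = c x * (fderiv ℝ V x (EuclideanSpace.single i 1)) i
        + fderiv ℝ c x (EuclideanSpace.single i 1) * V x i := by
    intro i
    simp [ContinuousLinearMap.smulRight_apply, PiLp.add_apply, PiLp.smul_apply, mul_comm]
  rw [Finset.sum_congr rfl fun i _ => this i, Finset.sum_add_distrib, ← Finset.mul_sum,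
    clm_decomp (fderiv ℝ c x) (V x)]
  ring_nf
  congr 1
  exact Finset.sum_congr rfl fun i _ => by ring

lemma continuous_divg {D : ℕ} {F : EuclideanSpace ℝ (Fin D) → EuclideanSpace ℝ (Fin D)}
    (hF : ContDiff ℝ 1 F) : Continuous (divg F) := by
  have h : Continuous (fderiv ℝ F) := hF.continuous_fderiv one_ne_zero
  unfold divg
  refine continuous_finset_sum _ fun i _ => ?_
  have h1 : Continuous fun x => fderiv ℝ F x (EuclideanSpace.single i 1) :=
    (ContinuousLinearMap.apply ℝ (EuclideanSpace ℝ (Fin D)) (EuclideanSpace.single i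
      (1:ℝ))).continuous.comp h
  exact (PiLp.continuous_apply 2 _ i).comp h1

lemma divg_of_eventually_zero {D : ℕ} {F : EuclideanSpace ℝ (Fin D) → EuclideanSpace ℝ (Fin D)}
    {x : EuclideanSpace ℝ (Fin D)} (h : ∀ᶠ y in nhds x, F y = 0) : divg F x = 0 := by
  unfold divg
  have : fderiv ℝ F x = fderiv ℝ (fun _ => (0 : EuclideanSpace ℝ (Fin D))) x :=
    Filter.EventuallyEq.fderiv_eq h
  rw [this, fderiv_fun_const]
  simp

lemma abs_coord_le_norm' {D : ℕ} (x : EuclideanSpace ℝ (Fin D)) (i : Fin D) : |x i| ≤ ‖x‖ := by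
  have := abs_real_inner_le_norm x (EuclideanSpace.single i (1:ℝ))
  simpa [EuclideanSpace.inner_single_right, EuclideanSpace.norm_single] using this

lemma integral_divg_eq_zero {n : ℕ}
    (f : EuclideanSpace ℝ (Fin (n+1)) → EuclideanSpace ℝ (Fin (n+1)))
    (hf : ContDiff ℝ 1 f) {K : Set (EuclideanSpace ℝ (Fin (n+1)))} (hK : IsCompact K)
    (hsupp : ∀ x ∉ K, f x = 0) : ∫ x, divg f x = 0 := by
  classical
  obtain ⟨M, hM0, hMK⟩ : ∃ M : ℝ, 0 ≤ M ∧ K ⊆ Metric.closedBall 0 M := by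
    obtain ⟨M, hMK⟩ := hK.isBounded.subset_closedBall 0
    exact ⟨max M 0, le_max_right _ _,
      hMK.trans (Metric.closedBall_subset_closedBall (le_max_left _ _))⟩
  set eL := EuclideanSpace.equiv (Fin (n+1)) ℝ with heL
  set F : (Fin (n+1) → ℝ) → (Fin (n+1) → ℝ) := fun y => eL (f (eL.symm y)) with hF
  set F' : (Fin (n+1) → ℝ) → (Fin (n+1) → ℝ) →L[ℝ] (Fin (n+1) → ℝ) := fun y =>
    (eL.toContinuousLinearMap.comp (fderiv ℝ f (eL.symm y))).comp eL.symm.toContinuousLinearMap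
    with hF'
  have hder : ∀ y, HasFDerivAt F (F' y) y := by
    intro y
    exact (eL.toContinuousLinearMap.hasFDerivAt.comp _
      ((hf.differentiable one_ne_zero _).hasFDerivAt.comp _ eL.symm.toContinuousLinearMap.hasFDerivAt))
  have hfz : ∀ x : EuclideanSpace ℝ (Fin (n+1)), M < ‖x‖ → fderiv ℝ f x = 0 := by
    intro x hx
    have hev : ∀ᶠ y in nhds x, f y = 0 := by
      have : {y : EuclideanSpace ℝ (Fin (n+1)) | M < ‖y‖} ∈ nhds x :=
        (isOpen_lt continuous_const continuous_norm).mem_nhds hx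
      filter_upwards [this] with y hy
      refine hsupp y fun hyK => ?_
      have := hMK hyK
      simp only [Metric.mem_closedBall, dist_zero_right] at this
      linarith
    calc fderiv ℝ f x = fderiv ℝ (fun _ => (0:EuclideanSpace ℝ (Fin (n+1)))) x :=
        Filter.EventuallyEq.fderiv_eq hev
      _ = 0 := by simp
  set a : Fin (n+1) → ℝ := fun _ => -(M+1)
  set b : Fin (n+1) → ℝ := fun _ => (M+1)
  have hle : a ≤ b := fun i => by simp [a, b]; linarith
  have hnorm_symm : ∀ y : Fin (n+1) → ℝ, ∀ i, |y i| ≤ ‖eL.symm y‖ := fun y i =>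
    abs_coord_le_norm' (eL.symm y) i
  have hdiv_eq : ∀ x : EuclideanSpace ℝ (Fin (n+1)),
      (∑ i, F' (eL x) (Pi.single i 1) i) = divg f x := by
    intro x
    unfold divg
    refine Finset.sum_congr rfl fun i _ => ?_
    have h1 : eL.symm (eL x) = x := eL.symm_apply_apply x
    simp only [hF', ContinuousLinearMap.comp_apply, ContinuousLinearEquiv.coe_coe, h1]
    congr 1
  have hdivF_cont : Continuous fun y : Fin (n+1) → ℝ => ∑ i, F' y (Pi.single i 1) i := by
    have : (fun y : Fin (n+1) → ℝ => ∑ i, F' y (Pi.single i 1) i)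
        = fun y => divg f (eL.symm y) := by
      funext y
      have := hdiv_eq (eL.symm y)
      rwa [eL.apply_symm_apply] at this
    rw [this]
    exact (continuous_divg hf).comp eL.symm.continuous
  have hdivF_zero : ∀ y : Fin (n+1) → ℝ, y ∉ Set.Icc a b →
      (∑ i, F' y (Pi.single i 1) i) = 0 := by
    intro y hy
    have : ∃ i, M < |y i| := by
      by_contra h
      push_neg at h
      refine hy ⟨fun i => ?_, fun i => ?_⟩
      · show -(M+1) ≤ y i
        linarith [(abs_le.mp (h i)).1]
      · show y i ≤ M+1
        linarith [(abs_le.mp (h i)).2]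
    obtain ⟨i, hi⟩ := this
    have hnorm : M < ‖eL.symm y‖ := lt_of_lt_of_le hi (hnorm_symm y i)
    have : fderiv ℝ f (eL.symm y) = 0 := hfz _ hnorm
    simp [hF', this]
  have hbox := MeasureTheory.integral_divergence_of_hasFDerivAt_off_countable a b hle F F'
    ∅ Set.countable_empty
    (by
      have : Continuous F := eL.continuous.comp ((hf.continuous).comp eL.symm.continuous)
      exact this.continuousOn)
    (fun x _ => hder x)
    (hdivF_cont.continuousOn.integrableOn_compact isCompact_Icc)
  have hface : ∀ (i : Fin (n+1)) (c : ℝ), M < |c| → ∀ x : Fin n → ℝ,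
      F (Fin.insertNth i c x) = 0 := by
    intro i c hc x
    have : M < ‖eL.symm (Fin.insertNth i c x)‖ := by
      refine lt_of_lt_of_le ?_ (hnorm_symm _ i)
      simpa using hc
    have hfx : f (eL.symm (Fin.insertNth i c x)) = 0 := by
      refine hsupp _ fun hyK => ?_
      have := hMK hyK
      simp only [Metric.mem_closedBall, dist_zero_right] at this
      linarith
    simp [hF, hfx]
  have hrhs : ∑ i : Fin (n+1),
      ((∫ x in Set.Icc (a ∘ Fin.succAbove i) (b ∘ Fin.succAbove i),
        F (Fin.insertNth i (b i) x) i) -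
      ∫ x in Set.Icc (a ∘ Fin.succAbove i) (b ∘ Fin.succAbove i),
        F (Fin.insertNth i (a i) x) i) = 0 := by
    refine Finset.sum_eq_zero fun i _ => ?_
    have h1 : ∀ x : Fin n → ℝ, F (Fin.insertNth i (b i) x) i = 0 := fun x => by
      rw [hface i (b i) (by simp [b]; rw [abs_of_nonneg] <;> linarith) x]; rfl
    have h2 : ∀ x : Fin n → ℝ, F (Fin.insertNth i (a i) x) i = 0 := fun x => by
      rw [hface i (a i) (by simp [a]; rw [abs_of_nonpos] <;> linarith) x]; rfl
    simp [h1, h2]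
  rw [hrhs] at hbox
  have hicc : ∫ y, (∑ i, F' y (Pi.single i 1) i) = 0 := by
    rw [← MeasureTheory.setIntegral_eq_integral_of_forall_compl_eq_zero hdivF_zero]
    exact hbox
  calc ∫ x, divg f x
      = ∫ x, (∑ i, F' ((MeasurableEquiv.toLp 2 (Fin (n+1) → ℝ)).symm x) (Pi.single i 1) i) := by
        refine integral_congr_ae (Filter.Eventually.of_forall fun x => ?_)
        exact (hdiv_eq x).symm
    _ = ∫ y, (∑ i, F' y (Pi.single i 1) i) :=
        (EuclideanSpace.volume_preserving_symm_measurableEquiv_toLp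
          (Fin (n+1))).integral_comp (MeasurableEquiv.toLp 2
          (Fin (n+1) → ℝ)).symm.measurableEmbedding (fun y => ∑ i, F' y (Pi.single i 1) i)
    _ = 0 := hicc

lemma integral_divg_eq_zero' {D : ℕ}
    (f : EuclideanSpace ℝ (Fin D) → EuclideanSpace ℝ (Fin D))
    (hf : ContDiff ℝ 1 f) {K : Set (EuclideanSpace ℝ (Fin D))} (hK : IsCompact K)
    (hsupp : ∀ x ∉ K, f x = 0) : ∫ x, divg f x = 0 := by
  cases D with
  | zero =>
    have : ∀ x, divg f x = 0 := fun x => by unfold divg; simp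
    simp [this]
  | succ n => exact integral_divg_eq_zero f hf hK hsupp

lemma key_identity {D : ℕ} (lam : ℝ) (R P : EuclideanSpace ℝ (Fin D) → ℝ)
    (U : EuclideanSpace ℝ (Fin D) → EuclideanSpace ℝ (Fin D))
    (hR : ContDiff ℝ 1 R) (hP : ContDiff ℝ 1 P) (hU : ContDiff ℝ 1 U)
    (hRpos : ∀ y, 0 < R y) (hPpos : ∀ y, 0 < P y) (x : EuclideanSpace ℝ (Fin D)) :
    - divg (fun y => R y • U y) x * (log (P x) + lam * log (R x) + lam)
      = R x * (⟪U x, gradient (fun y => log (P y)) x⟫ - lam * divg U x)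
        - divg (fun y => ((log (P y) + lam * log (R y)) * R y) • U y) x := by
  have hRd : DifferentiableAt ℝ R x := hR.differentiable one_ne_zero x
  have hPd : DifferentiableAt ℝ P x := hP.differentiable one_ne_zero x
  have hUd : DifferentiableAt ℝ U x := hU.differentiable one_ne_zero x
  have hlogP : HasFDerivAt (fun y => log (P y)) ((P x)⁻¹ • fderiv ℝ P x) x :=
    (Real.hasDerivAt_log (hPpos x).ne').comp_hasFDerivAt x hPd.hasFDerivAt
  have hlogR : HasFDerivAt (fun y => log (R y)) ((R x)⁻¹ • fderiv ℝ R x) x :=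
    (Real.hasDerivAt_log (hRpos x).ne').comp_hasFDerivAt x hRd.hasFDerivAt
  have hg : HasFDerivAt (fun y => log (P y) + lam * log (R y))
      ((P x)⁻¹ • fderiv ℝ P x + lam • ((R x)⁻¹ • fderiv ℝ R x)) x :=
    hlogP.add (hlogR.const_mul lam)
  have hgR : HasFDerivAt (fun y => (log (P y) + lam * log (R y)) * R y)
      ((log (P x) + lam * log (R x)) • fderiv ℝ R x
        + ((P x)⁻¹ • fderiv ℝ P x + lam • ((R x)⁻¹ • fderiv ℝ R x)).smulRight (R x)) x :=
    hg.mul' hRd.hasFDerivAt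
  rw [divg_smul R U x hRd hUd,
      divg_smul (fun y => (log (P y) + lam * log (R y)) * R y) U x
        hgR.differentiableAt hUd,
      hgR.fderiv]
  have hgrad : ⟪U x, gradient (fun y => log (P y)) x⟫ = (P x)⁻¹ * fderiv ℝ P x (U x) := by
    rw [real_inner_comm]
    rw [show gradient (fun y => log (P y)) x
        = (InnerProductSpace.toDual ℝ _).symm (fderiv ℝ (fun y => log (P y)) x) from rfl]
    rw [InnerProductSpace.toDual_symm_apply, hlogP.fderiv]
    simp
  rw [hgrad]
  simp only [ContinuousLinearMap.add_apply, ContinuousLinearMap.smul_apply,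
    ContinuousLinearMap.smulRight_apply, smul_eq_mul]
  have hRne : R x ≠ 0 := (hRpos x).ne'
  field_simp
  ring

lemma integrand_hasDerivAt {D : ℕ} (lam : ℝ) (r : ℝ × EuclideanSpace ℝ (Fin D) → ℝ)
    (hr : ContDiff ℝ 1 r) (hrpos : ∀ τ x, 0 < r (τ, x))
    (phat : EuclideanSpace ℝ (Fin D) → ℝ)
    (t : ℝ) (x : EuclideanSpace ℝ (Fin D)) :
    HasDerivAt (fun s => r (s, x) * (log (phat x) + lam * log (r (s, x))))
      (fderiv ℝ r (t,x) (1,0) * (log (phat x) + lam * log (r (t, x)) + lam)) t := by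
  have hcurve : HasDerivAt (fun s : ℝ => (s, x)) ((1:ℝ), (0:EuclideanSpace ℝ (Fin D))) t :=
    (hasDerivAt_id t).prodMk (hasDerivAt_const t x)
  have hR : HasDerivAt (fun s => r (s, x)) (fderiv ℝ r (t,x) (1,0)) t :=
    (hr.differentiable one_ne_zero (t,x)).hasFDerivAt.comp_hasDerivAt t hcurve
  have hlog : HasDerivAt (fun s => log (r (s, x)))
      ((r (t,x))⁻¹ * fderiv ℝ r (t,x) (1,0)) t :=
    (Real.hasDerivAt_log (hrpos t x).ne').comp (h := fun s => r (s, x)) t hR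
  have h1 : HasDerivAt (fun s => log (phat x) + lam * log (r (s, x)))
      (lam * ((r (t,x))⁻¹ * fderiv ℝ r (t,x) (1,0))) t := by
    simpa using hlog.const_mul lam
  have : HasDerivAt (fun s => r (s, x) * (log (phat x) + lam * log (r (s, x)))) _ t := hR.mul h1
  convert this using 1
  have hne : r (t,x) ≠ 0 := (hrpos t x).ne'
  field_simp

/-- Proposition 2 of the paper: along the continuity equation
`∂r/∂τ = −div(r u)` with compactly supported `u`, the NER cost functional
`F(τ) = ∫ r(τ,x) (log phat(x) + λ log r(τ,x)) dx` is differentiable at `τ₀` with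
`F'(τ₀) = ∫ r(τ₀,x) (⟪u, ∇log phat⟫ − λ div u) dx`. -/
theorem stmt_4 {D : ℕ} (lam τ₀ : ℝ)
    (r : ℝ × EuclideanSpace ℝ (Fin D) → ℝ) (hr : ContDiff ℝ 1 r)
    (hrpos : ∀ τ x, 0 < r (τ, x))
    (u : ℝ × EuclideanSpace ℝ (Fin D) → EuclideanSpace ℝ (Fin D)) (hu : ContDiff ℝ 1 u)
    (K : Set (EuclideanSpace ℝ (Fin D))) (hK : IsCompact K)
    (husupp : ∀ τ x, x ∉ K → u (τ, x) = 0)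
    (phat : EuclideanSpace ℝ (Fin D) → ℝ) (hp : ContDiff ℝ 1 phat) (hppos : ∀ x, 0 < phat x)
    (hcont : ∀ τ x, deriv (fun t => r (t, x)) τ = - divg (fun y => r (τ, y) • u (τ, y)) x)
    (hint : ∀ᶠ τ in nhds τ₀,
      Integrable fun x => r (τ, x) * (log (phat x) + lam * log (r (τ, x))))
    (bound : EuclideanSpace ℝ (Fin D) → ℝ) (hbound : Integrable bound)
    (hdom : ∀ᶠ τ in nhds τ₀, ∀ x,
      |deriv (fun t => r (t, x) * (log (phat x) + lam * log (r (t, x)))) τ| ≤ bound x)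
    (hint0 : Integrable fun x => r (τ₀, x) *
      (⟪u (τ₀, x), gradient (fun y => log (phat y)) x⟫
        - lam * divg (fun y => u (τ₀, y)) x)) :
    HasDerivAt (fun τ => ∫ x, r (τ, x) * (log (phat x) + lam * log (r (τ, x))))
      (∫ x, r (τ₀, x) *
        (⟪u (τ₀, x), gradient (fun y => log (phat y)) x⟫
          - lam * divg (fun y => u (τ₀, y)) x)) τ₀ := by
  classical
  set G : ℝ → EuclideanSpace ℝ (Fin D) → ℝ := fun t x => r (t, x) * (log (phat x) + lam * log (r (t, x))) with hG
  set G' : ℝ → EuclideanSpace ℝ (Fin D) → ℝ := fun t x =>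
    fderiv ℝ r (t,x) (1,0) * (log (phat x) + lam * log (r (t, x)) + lam) with hG'
  have hDeriv : ∀ t x, HasDerivAt (fun s => G s x) (G' t x) t := fun t x =>
    integrand_hasDerivAt lam r hr hrpos phat t x
  have hGder : ∀ t x, deriv (fun s => G s x) t = G' t x := fun t x => (hDeriv t x).deriv
  -- pick ε for the bound
  obtain ⟨ε, εpos, hε⟩ : ∃ ε > 0, ∀ t ∈ Metric.ball τ₀ ε, ∀ x, |G' t x| ≤ bound x := by
    obtain ⟨ε, εpos, hε⟩ := Metric.eventually_nhds_iff_ball.mp hdom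
    exact ⟨ε, εpos, fun t ht x => (hGder t x) ▸ hε t ht x⟩
  -- continuity in x of the integrand and of G'
  have hcontx : ∀ t, Continuous fun x => G t x := by
    intro t
    have h1 : ContDiff ℝ 1 fun x : EuclideanSpace ℝ (Fin D) => r (t, x) :=
      hr.comp (contDiff_const.prodMk contDiff_id)
    have h2 : ContDiff ℝ 1 fun x : EuclideanSpace ℝ (Fin D) => log (r (t, x)) :=
      h1.log fun x => (hrpos t x).ne'
    have h3 : ContDiff ℝ 1 fun x : EuclideanSpace ℝ (Fin D) => log (phat x) := hp.log fun x => (hppos x).ne'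
    exact (h1.continuous).mul ((h3.continuous).add (continuous_const.mul h2.continuous))
  have hG'cont : Continuous fun x => G' τ₀ x := by
    have h0 : Continuous fun x : EuclideanSpace ℝ (Fin D) => ((τ₀, x) : ℝ × EuclideanSpace ℝ (Fin D)) := Continuous.prodMk_right τ₀
    have h1 : Continuous fun x : EuclideanSpace ℝ (Fin D) => fderiv ℝ r (τ₀, x) :=
      (hr.continuous_fderiv one_ne_zero).comp h0
    have h2 : Continuous fun x : EuclideanSpace ℝ (Fin D) => fderiv ℝ r (τ₀, x) (1,0) :=
      (ContinuousLinearMap.apply ℝ ℝ ((1:ℝ), (0:EuclideanSpace ℝ (Fin D)))).continuous.comp h1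
    have h3 : ContDiff ℝ 1 fun x : EuclideanSpace ℝ (Fin D) => log (r (τ₀, x)) :=
      (hr.comp (contDiff_const.prodMk contDiff_id)).log fun x => (hrpos τ₀ x).ne'
    have h4 : ContDiff ℝ 1 fun x : EuclideanSpace ℝ (Fin D) => log (phat x) := hp.log fun x => (hppos x).ne'
    exact h2.mul (((h4.continuous).add (continuous_const.mul h3.continuous)).add
      continuous_const)
  have key := hasDerivAt_integral_of_dominated_loc_of_deriv_le (Metric.ball_mem_nhds τ₀ εpos)
    (F := G) (F' := G') (bound := bound) (μ := volume) (x₀ := τ₀)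
    (Filter.Eventually.of_forall fun t => (hcontx t).aestronglyMeasurable)
    (hint.self_of_nhds)
    (hG'cont.aestronglyMeasurable)
    (Filter.Eventually.of_forall fun x t ht => by
      simpa [Real.norm_eq_abs] using hε t ht x)
    hbound
    (Filter.Eventually.of_forall fun x t ht => hDeriv t x)
  obtain ⟨-, hkey⟩ := key
  -- identify the derivative integral with the target integral
  have heq : ∀ x, G' τ₀ x
      = r (τ₀, x) * (⟪u (τ₀, x), gradient (fun y => log (phat y)) x⟫
          - lam * divg (fun y => u (τ₀, y)) x)
        - divg (fun y => ((log (phat y) + lam * log (r (τ₀, y))) * r (τ₀, y)) • u (τ₀, y)) x := by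
    intro x
    have hfd : fderiv ℝ r (τ₀, x) (1,0) = - divg (fun y => r (τ₀, y) • u (τ₀, y)) x := by
      have h1 : HasDerivAt (fun t => r (t, x)) (fderiv ℝ r (τ₀,x) (1,0)) τ₀ := by
        have hcurve : HasDerivAt (fun s : ℝ => (s, x)) ((1:ℝ), (0:EuclideanSpace ℝ (Fin D))) τ₀ :=
          (hasDerivAt_id τ₀).prodMk (hasDerivAt_const τ₀ x)
        exact (hr.differentiable one_ne_zero (τ₀,x)).hasFDerivAt.comp_hasDerivAt τ₀ hcurve
      rw [← h1.deriv]
      exact hcont τ₀ x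
    have hRc : ContDiff ℝ 1 fun y : EuclideanSpace ℝ (Fin D) => r (τ₀, y) :=
      hr.comp (contDiff_const.prodMk contDiff_id)
    have hUc : ContDiff ℝ 1 fun y : EuclideanSpace ℝ (Fin D) => u (τ₀, y) :=
      hu.comp (contDiff_const.prodMk contDiff_id)
    have := key_identity lam (fun y => r (τ₀, y)) phat (fun y => u (τ₀, y))
      hRc hp hUc (fun y => hrpos τ₀ y) hppos x
    simp only [hG', hfd]
    exact this
  -- the divergence term integrates to zero
  set W : EuclideanSpace ℝ (Fin D) → EuclideanSpace ℝ (Fin D) := fun y => ((log (phat y) + lam * log (r (τ₀, y))) * r (τ₀, y)) • u (τ₀, y)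
    with hW
  have hWc : ContDiff ℝ 1 W := by
    have hRc : ContDiff ℝ 1 fun y : EuclideanSpace ℝ (Fin D) => r (τ₀, y) :=
      hr.comp (contDiff_const.prodMk contDiff_id)
    have hUc : ContDiff ℝ 1 fun y : EuclideanSpace ℝ (Fin D) => u (τ₀, y) :=
      hu.comp (contDiff_const.prodMk contDiff_id)
    have h3 : ContDiff ℝ 1 fun y : EuclideanSpace ℝ (Fin D) => log (r (τ₀, y)) := hRc.log fun y => (hrpos τ₀ y).ne'
    have h4 : ContDiff ℝ 1 fun y : EuclideanSpace ℝ (Fin D) => log (phat y) := hp.log fun y => (hppos y).ne'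
    exact ((h4.add (contDiff_const.mul h3)).mul hRc).smul hUc
  have hWsupp : ∀ y ∉ K, W y = 0 := fun y hy => by
    rw [hW]; simp only [husupp τ₀ y hy, smul_zero]
  have hWzero : ∫ x, divg W x = 0 := integral_divg_eq_zero' W hWc hK hWsupp
  have hWint : Integrable (divg W) := by
    refine (continuous_divg hWc).integrable_of_hasCompactSupport ?_
    refine HasCompactSupport.intro hK fun y hy => ?_
    refine divg_of_eventually_zero ?_
    filter_upwards [hK.isClosed.isOpen_compl.mem_nhds hy] with z hz
    exact hWsupp z hz
  have hint_eq : (∫ x, G' τ₀ x)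
      = ∫ x, r (τ₀, x) * (⟪u (τ₀, x), gradient (fun y => log (phat y)) x⟫
          - lam * divg (fun y => u (τ₀, y)) x) := by
    calc (∫ x, G' τ₀ x)
        = ∫ x, (r (τ₀, x) * (⟪u (τ₀, x), gradient (fun y => log (phat y)) x⟫
            - lam * divg (fun y => u (τ₀, y)) x) - divg W x) := by
          exact integral_congr_ae (Filter.Eventually.of_forall fun x => heq x)
      _ = (∫ x, r (τ₀, x) * (⟪u (τ₀, x), gradient (fun y => log (phat y)) x⟫
            - lam * divg (fun y => u (τ₀, y)) x)) - ∫ x, divg W x :=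
          integral_sub hint0 hWint
      _ = _ := by rw [hWzero, sub_zero]
  rw [← hint_eq]
  exact hkey
end

section
/- Fix D ∈ ℕ and τ₀ ∈ ℝ. Let r : ℝ × ℝ^D → ℝ be C¹ with r(τ, ·) strictly positive, and let u : ℝ × ℝ^D → ℝ^D be C¹ with u(τ, x) = 0 for all τ and all x outside a fixed compact set K ⊆ ℝ^D. Assume the continuity equation ∂r/∂τ(τ,x) = −div_x( r(τ,·)·u(τ,·) )(x) for all (τ,x), that x ↦ r(τ,x)·log r(τ,x) is Lebesgue integrable for τ near τ₀ with its pointwise τ-derivative dominated uniformly near τ₀ by a fixed integrable function, and that x ↦ r(τ₀,x)·div_x u(τ₀,x) is integrable. Then τ ↦ ∫ r(τ,x)·log r(τ,x) dx is differentiable at τ₀ with derivative −∫ r(τ₀,x)·div_x u(τ₀,x) dx; equivalently, the differential entropy H(τ) := −∫ r(τ,·) log r(τ,·) satisfies H′(τ₀) = ∫ r(τ₀,x)·div_x u(τ₀,x) dx. -/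
open MeasureTheory Real

section Aux

variable {D : ℕ}

lemma coord_contDiff (G : EuclideanSpace ℝ (Fin D) → EuclideanSpace ℝ (Fin D))
    (hG : ContDiff ℝ 1 G) (i : Fin D) : ContDiff ℝ 1 (fun y => G y i) :=
  (EuclideanSpace.proj (𝕜 := ℝ) i).contDiff.comp hG

lemma coord_fderiv (G : EuclideanSpace ℝ (Fin D) → EuclideanSpace ℝ (Fin D))
    (hG : ContDiff ℝ 1 G) (i : Fin D) (x v : EuclideanSpace ℝ (Fin D)) :
    fderiv ℝ (fun y => G y i) x v = fderiv ℝ G x v i := by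
  have h := ((EuclideanSpace.proj (𝕜 := ℝ) i).hasFDerivAt.comp x
      ((hG.differentiable one_ne_zero) x).hasFDerivAt).fderiv
  have : fderiv ℝ (fun y => G y i) x = (EuclideanSpace.proj (𝕜 := ℝ) i).comp (fderiv ℝ G x) := h
  rw [this]; rfl

lemma integral_fderiv_apply_zero (g : EuclideanSpace ℝ (Fin D) → ℝ)
    (hg : ContDiff ℝ 1 g) (hs : HasCompactSupport g) (v : EuclideanSpace ℝ (Fin D)) :
    ∫ x, fderiv ℝ g x v = 0 := by
  have h := integral_mul_fderiv_eq_neg_fderiv_mul_of_integrable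
      (μ := (volume : Measure (EuclideanSpace ℝ (Fin D))))
      (f := fun _ => (1:ℝ)) (g := g) (v := v)
      ?_ ?_ ?_ (fun x _ => differentiableAt_const (1:ℝ)) (fun x _ => hg.differentiable one_ne_zero x)
  · simpa [fderiv_fun_const] using h
  · simp [fderiv_fun_const]
  · simpa using ((hg.continuous_fderiv one_ne_zero).clm_apply continuous_const).integrable_of_hasCompactSupport
      (hs.fderiv_apply ℝ v)
  · simpa using hg.continuous.integrable_of_hasCompactSupport hs

lemma integrable_fderiv_apply (g : EuclideanSpace ℝ (Fin D) → ℝ)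
    (hg : ContDiff ℝ 1 g) (hs : HasCompactSupport g) (v : EuclideanSpace ℝ (Fin D)) :
    Integrable (fun x => fderiv ℝ g x v) :=
  ((hg.continuous_fderiv one_ne_zero).clm_apply continuous_const).integrable_of_hasCompactSupport
      (hs.fderiv_apply ℝ v)

lemma integral_divg_zero (G : EuclideanSpace ℝ (Fin D) → EuclideanSpace ℝ (Fin D))
    (hG : ContDiff ℝ 1 G) (hs : HasCompactSupport G) :
    ∫ x, divg G x = 0 := by
  have hcs : ∀ i : Fin D, HasCompactSupport (fun y => G y i) := by
    intro i
    exact hs.comp_left (g := EuclideanSpace.proj (𝕜 := ℝ) i) (by simp)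
  have key : (fun x => divg G x)
      = fun x => ∑ i, fderiv ℝ (fun y => G y i) x (EuclideanSpace.single i 1) := by
    funext x
    exact Finset.sum_congr rfl fun i _ => (coord_fderiv G hG i x _).symm
  rw [key, integral_finset_sum _ (fun i _ =>
    integrable_fderiv_apply _ (coord_contDiff G hG i) (hcs i) _)]
  exact Finset.sum_eq_zero fun i _ =>
    integral_fderiv_apply_zero _ (coord_contDiff G hG i) (hcs i) _

lemma divg_continuous (G : EuclideanSpace ℝ (Fin D) → EuclideanSpace ℝ (Fin D))
    (hG : ContDiff ℝ 1 G) : Continuous (divg G) := by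
  apply continuous_finset_sum
  intro i _
  exact (EuclideanSpace.proj (𝕜 := ℝ) i).continuous.comp
    ((hG.continuous_fderiv one_ne_zero).clm_apply continuous_const)

lemma divg_hasCompactSupport (G : EuclideanSpace ℝ (Fin D) → EuclideanSpace ℝ (Fin D))
    (hs : HasCompactSupport G) : HasCompactSupport (divg G) :=
  (hs.fderiv ℝ).comp_left
    (g := fun L : _ →L[ℝ] EuclideanSpace ℝ (Fin D) => ∑ i, L (EuclideanSpace.single i 1) i)
    (by simp)

lemma divg_smul_s6 (f : EuclideanSpace ℝ (Fin D) → ℝ)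
    (w : EuclideanSpace ℝ (Fin D) → EuclideanSpace ℝ (Fin D))
    (hf : ContDiff ℝ 1 f) (hw : ContDiff ℝ 1 w) (x : EuclideanSpace ℝ (Fin D)) :
    divg (fun y => f y • w y) x
      = f x * divg w x + ∑ i, fderiv ℝ f x (EuclideanSpace.single i 1) * w x i := by
  unfold divg
  rw [fderiv_fun_smul ((hf.differentiable one_ne_zero) x) ((hw.differentiable one_ne_zero) x)]
  simp only [ContinuousLinearMap.add_apply, ContinuousLinearMap.coe_smul',
    Pi.smul_apply, ContinuousLinearMap.smulRight_apply, PiLp.add_apply,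
    PiLp.smul_apply, smul_eq_mul]
  rw [Finset.sum_add_distrib, Finset.mul_sum]

lemma entropy_fderiv (f : EuclideanSpace ℝ (Fin D) → ℝ) (hf : ContDiff ℝ 1 f)
    (hpos : ∀ x, 0 < f x) (x : EuclideanSpace ℝ (Fin D)) :
    fderiv ℝ (fun y => f y * log (f y)) x = (log (f x) + 1) • fderiv ℝ f x :=
  ((Real.hasDerivAt_mul_log (hpos x).ne').comp_hasFDerivAt x
    ((hf.differentiable one_ne_zero) x).hasFDerivAt).fderiv

end Aux

/-- entropy evolution along the continuity equation
`∂r/∂τ = −div(r u)`: `d/dτ ∫ r log r = −∫ r(τ₀,·) div u(τ₀,·)` at `τ = τ₀`. -/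
theorem stmt_6 {D : ℕ} (τ₀ : ℝ)
    (r : ℝ × EuclideanSpace ℝ (Fin D) → ℝ) (hr : ContDiff ℝ 1 r)
    (hrpos : ∀ τ x, 0 < r (τ, x))
    (u : ℝ × EuclideanSpace ℝ (Fin D) → EuclideanSpace ℝ (Fin D)) (hu : ContDiff ℝ 1 u)
    (K : Set (EuclideanSpace ℝ (Fin D))) (hK : IsCompact K)
    (husupp : ∀ τ x, x ∉ K → u (τ, x) = 0)
    (hcont : ∀ τ x, deriv (fun t => r (t, x)) τ = - divg (fun y => r (τ, y) • u (τ, y)) x)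
    (hint : ∀ᶠ τ in nhds τ₀, Integrable fun x => r (τ, x) * log (r (τ, x)))
    (bound : EuclideanSpace ℝ (Fin D) → ℝ) (hbound : Integrable bound)
    (hdom : ∀ᶠ τ in nhds τ₀, ∀ x,
      |deriv (fun t => r (t, x) * log (r (t, x))) τ| ≤ bound x)
    (hint0 : Integrable fun x => r (τ₀, x) * divg (fun y => u (τ₀, y)) x) :
    HasDerivAt (fun τ => ∫ x, r (τ, x) * log (r (τ, x)))
      (-∫ x, r (τ₀, x) * divg (fun y => u (τ₀, y)) x) τ₀ := by
  classical
  set f : EuclideanSpace ℝ (Fin D) → ℝ := fun x => r (τ₀, x) with hf_def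
  set u₀ : EuclideanSpace ℝ (Fin D) → EuclideanSpace ℝ (Fin D) := fun x => u (τ₀, x) with hu₀_def
  have hfC : ContDiff ℝ 1 f := hr.comp (contDiff_const.prodMk contDiff_id)
  have hu₀C : ContDiff ℝ 1 u₀ := hu.comp (contDiff_const.prodMk contDiff_id)
  have hfpos : ∀ x, 0 < f x := fun x => hrpos τ₀ x
  set φ : EuclideanSpace ℝ (Fin D) → ℝ := fun x => f x * log (f x) with hφ_def
  have hφC : ContDiff ℝ 1 φ := hfC.mul (hfC.log fun x => (hfpos x).ne')
  -- time-slice differentiability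
  have hslice : ∀ x, ContDiff ℝ 1 (fun t => r (t, x)) :=
    fun x => hr.comp (contDiff_id.prodMk contDiff_const)
  have hdiffble : ∀ (t : ℝ) x, DifferentiableAt ℝ (fun s => r (s, x) * log (r (s, x))) t := by
    intro t x
    have h1 : DifferentiableAt ℝ (fun s => r (s, x)) t := ((hslice x).differentiable one_ne_zero) t
    exact h1.mul (h1.log (hrpos t x).ne')
  set F' : ℝ → EuclideanSpace ℝ (Fin D) → ℝ :=
    fun t x => deriv (fun s => r (s, x) * log (r (s, x))) t with hF'_def
  -- the key pointwise identity at τ₀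
  have hkey : ∀ x, F' τ₀ x = -(divg (fun y => φ y • u₀ y) x) - f x * divg u₀ x := by
    intro x
    have h1 : DifferentiableAt ℝ (fun s => r (s, x)) τ₀ := ((hslice x).differentiable one_ne_zero) τ₀
    have hchain : HasDerivAt (fun s => r (s, x) * log (r (s, x)))
        ((log (r (τ₀, x)) + 1) * deriv (fun s => r (s, x)) τ₀) τ₀ :=
      by have := (Real.hasDerivAt_mul_log (hrpos τ₀ x).ne').comp τ₀ h1.hasDerivAt; exact this
    have hval : F' τ₀ x = (log (f x) + 1) * deriv (fun s => r (s, x)) τ₀ := hchain.deriv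
    rw [hval, hcont τ₀ x]
    have e1 : divg (fun y => f y • u₀ y) x
        = f x * divg u₀ x + ∑ i, fderiv ℝ f x (EuclideanSpace.single i 1) * u₀ x i :=
      divg_smul_s6 f u₀ hfC hu₀C x
    have e2 : divg (fun y => φ y • u₀ y) x
        = φ x * divg u₀ x + ∑ i, fderiv ℝ φ x (EuclideanSpace.single i 1) * u₀ x i :=
      divg_smul_s6 φ u₀ hφC hu₀C x
    have e3 : ∑ i, fderiv ℝ φ x (EuclideanSpace.single i 1) * u₀ x i
        = (log (f x) + 1) * ∑ i, fderiv ℝ f x (EuclideanSpace.single i 1) * u₀ x i := by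
      rw [Finset.mul_sum]
      refine Finset.sum_congr rfl fun i _ => ?_
      rw [entropy_fderiv f hfC hfpos x]
      simp [mul_assoc]
    have hfu : (fun y => r (τ₀, y) • u (τ₀, y)) = fun y => f y • u₀ y := rfl
    rw [hfu, e1, e2, e3, hφ_def]
    ring
  -- compact support facts
  have hφu_supp : HasCompactSupport (fun y => φ y • u₀ y) :=
    HasCompactSupport.intro hK fun x hx => by simp [hu₀_def, husupp τ₀ x hx]
  have hφuC : ContDiff ℝ 1 (fun y => φ y • u₀ y) := hφC.smul hu₀C
  -- integrability of the pieces
  have hint1 : Integrable (fun x => divg (fun y => φ y • u₀ y) x) :=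
    (divg_continuous _ hφuC).integrable_of_hasCompactSupport
      (divg_hasCompactSupport _ hφu_supp)
  -- the value of the integral of F' τ₀
  have hIval : ∫ x, F' τ₀ x = -∫ x, f x * divg u₀ x := by
    have heq : F' τ₀
        = fun x => -divg (fun y => φ y • u₀ y) x - f x * divg u₀ x := funext hkey
    have hneg : Integrable (fun x => -divg (fun y => φ y • u₀ y) x)
        (volume : Measure (EuclideanSpace ℝ (Fin D))) := hint1.neg
    rw [heq, integral_sub hneg hint0, integral_neg,
      integral_divg_zero _ hφuC hφu_supp]
    simp
    rfl
  -- differentiation under the integral sign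
  obtain ⟨ε, εpos, hε⟩ := Metric.eventually_nhds_iff_ball.1 hdom
  have H := hasDerivAt_integral_of_dominated_loc_of_deriv_le
      (μ := (volume : Measure (EuclideanSpace ℝ (Fin D))))
      (F := fun t x => r (t, x) * log (r (t, x))) (F' := F') (x₀ := τ₀)
      (bound := bound) (Metric.ball_mem_nhds τ₀ εpos) ?_ hint.self_of_nhds ?_ ?_ hbound ?_
  · exact hIval ▸ H.2
  · refine Filter.Eventually.of_forall fun t => Continuous.aestronglyMeasurable ?_
    have hc : Continuous fun x => r (t, x) := hr.continuous.comp (by continuity)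
    exact hc.mul (hc.log fun x => (hrpos t x).ne')
  · have heq : F' τ₀
        = fun x => -divg (fun y => φ y • u₀ y) x - f x * divg u₀ x := funext hkey
    rw [heq]
    exact ((divg_continuous _ hφuC).neg.sub
      (hfC.continuous.mul (divg_continuous _ hu₀C))).aestronglyMeasurable
  · exact ae_of_all _ fun x t ht => by
      rw [Real.norm_eq_abs]; exact hε t ht x
  · exact ae_of_all _ fun x t ht => (hdiffble t x).hasDerivAt
end

section
/- Fix D ∈ ℕ. Let k : ℝ^D × ℝ^D → ℝ be continuous and positive semidefinite in the finite-sum sense: for every N ∈ ℕ, every x₁,…,x_N ∈ ℝ^D and every c₁,…,c_N ∈ ℝ, ∑_{i,j} c_i·c_j·k(x_i, x_j) ≥ 0. Let μ be a finite Borel measure on ℝ^D with compact support and let g : ℝ^D → ℝ^D be continuous. Then ∬ k(x, y)·⟪g(x), g(y)⟫ dμ(x) dμ(y) ≥ 0. -/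
open MeasureTheory RealInnerProductSpace

private theorem stmt8_aux {D : ℕ}
    (F : EuclideanSpace ℝ (Fin D) × EuclideanSpace ℝ (Fin D) → ℝ)
    (hFc : Continuous F)
    (hFpsd : ∀ (N : ℕ) (x : Fin N → EuclideanSpace ℝ (Fin D)) (c : Fin N → ℝ),
      0 ≤ ∑ i, ∑ j, c i * c j * F (x i, x j))
    (μ : Measure (EuclideanSpace ℝ (Fin D))) [IsFiniteMeasure μ]
    (K : Set (EuclideanSpace ℝ (Fin D))) (hK : IsCompact K) (hμK : μ Kᶜ = 0) :
    0 ≤ ∫ x, ∫ y, F (x, y) ∂μ ∂μ := by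
  classical
  rcases K.eq_empty_or_nonempty with hKe | hKne
  · have h := hμK
    rw [hKe, Set.compl_empty] at h
    have hμ0 : μ = 0 := Measure.measure_univ_eq_zero.mp h
    simp [hμ0]
  have hKm : MeasurableSet K := hK.isClosed.measurableSet
  have hres : μ.restrict K = μ :=
    Measure.restrict_eq_self_of_ae_mem (by rw [Filter.eventually_iff]; exact mem_ae_iff.mpr hμK)
  -- bound on |F| over K × K
  obtain ⟨pM, -, hpM⟩ := (hK.prod hK).exists_isMaxOn (hKne.prod hKne)
      (continuous_abs.comp hFc).continuousOn
  set M := |F pM| with hMdef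
  have hM0 : 0 ≤ M := abs_nonneg _
  have hFbd : ∀ p ∈ K ×ˢ K, |F p| ≤ M := hpM
  -- inner integrability
  have hint_inner : ∀ x₀, IntegrableOn (fun y => F (x₀, y)) K μ := fun x₀ =>
    ((hFc.comp (Continuous.prodMk_right x₀)).continuousOn).integrableOn_compact hK
  set T := (μ Set.univ).toReal with hTdef
  have hT0 : 0 ≤ T := ENNReal.toReal_nonneg
  refine le_of_forall_pos_le_add fun ε hε => ?_
  set ε' := ε / (T ^ 2 + 1) with hε'def
  have hε' : 0 < ε' := by positivity
  -- uniform continuity on K × K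
  obtain ⟨δ, hδ0, hδ⟩ := Metric.uniformContinuousOn_iff.mp
    ((hK.prod hK).uniformContinuousOn_of_continuous hFc.continuousOn) ε' hε'
  set r := δ / 2 with hrdef
  have hr0 : 0 < r := by positivity
  -- finite cover by balls centered in K
  obtain ⟨t, htK, htf, htc⟩ := totallyBounded_iff_subset.mp hK.totallyBounded
    {p | dist p.1 p.2 < r} (Metric.dist_mem_uniformity hr0)
  obtain ⟨n, z, hz⟩ := htf.fin_embedding
  have hzK : ∀ i, (z i : EuclideanSpace ℝ (Fin D)) ∈ K := fun i =>
    htK (hz ▸ Set.mem_range_self i)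
  have hcover : ∀ w ∈ K, ∃ i, w ∈ Metric.ball (z i) r := by
    intro w hw
    obtain ⟨y, hyt, hwy⟩ := Set.mem_iUnion₂.mp (htc hw)
    obtain ⟨i, rfl⟩ := hz ▸ hyt
    exact ⟨i, by simpa [Metric.mem_ball] using hwy⟩
  -- the partition
  set A : Fin n → Set (EuclideanSpace ℝ (Fin D)) := fun i =>
    (K ∩ Metric.ball (z i) r) \ ⋃ (j : Fin n) (_ : j < i), Metric.ball (z j) r with hAdef
  have hAm : ∀ i, MeasurableSet (A i) := fun i =>
    (hKm.inter measurableSet_ball).diff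
      (MeasurableSet.iUnion fun j => MeasurableSet.iUnion fun _ => measurableSet_ball)
  have hAK : ∀ i, A i ⊆ K := fun i x hx => hx.1.1
  have hAb : ∀ i, A i ⊆ Metric.ball (z i) r := fun i x hx => hx.1.2
  have hAd : Pairwise (Function.onFun Disjoint A) := by
    have h2 : ∀ i j : Fin n, i < j → Disjoint (A i) (A j) := by
      intro i j hij
      rw [Set.disjoint_left]
      intro a ha haj
      exact haj.2 (Set.mem_iUnion.mpr ⟨i, Set.mem_iUnion.mpr ⟨hij, hAb i ha⟩⟩)
    intro i j hij
    rcases hij.lt_or_gt with h | h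
    · exact h2 _ _ h
    · exact (h2 _ _ h).symm
  have hAu : ⋃ i, A i = K := by
    refine Set.Subset.antisymm (Set.iUnion_subset hAK) fun w hw => ?_
    obtain ⟨i, hi⟩ := hcover w hw
    set S : Finset (Fin n) := Finset.univ.filter (fun i => w ∈ Metric.ball (z i) r) with hS
    have hSne : S.Nonempty :=
      ⟨i, by simp only [hS, Finset.mem_filter, Finset.mem_univ, true_and]; exact Metric.mem_ball.mp hi⟩
    set i₀ := S.min' hSne with hi₀
    have hi₀S : i₀ ∈ S := S.min'_mem hSne
    have hwb : w ∈ Metric.ball (z i₀) r := by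
      have h := hi₀S
      simp only [hS, Finset.mem_filter] at h
      exact h.2
    refine Set.mem_iUnion.mpr ⟨i₀, ⟨⟨hw, hwb⟩, ?_⟩⟩
    intro hmem
    obtain ⟨j, hj⟩ := Set.mem_iUnion.mp hmem
    obtain ⟨hji, hwj⟩ := Set.mem_iUnion.mp hj
    exact absurd (S.min'_le j (by simp only [hS, Finset.mem_filter, Finset.mem_univ, true_and]; exact Metric.mem_ball.mp hwj)) (not_le.mpr hji)
  set c : Fin n → ℝ := fun i => (μ (A i)).toReal with hcdef
  have hc0 : ∀ i, 0 ≤ c i := fun i => ENNReal.toReal_nonneg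
  -- inner integral decomposition
  set G : Fin n → EuclideanSpace ℝ (Fin D) → ℝ := fun j x => ∫ y in A j, F (x, y) ∂μ with hGdef
  have step1 : ∀ x₀, ∫ y, F (x₀, y) ∂μ = ∑ j, G j x₀ := by
    intro x₀
    have h1 : ∫ y in (⋃ i, A i), F (x₀, y) ∂μ = ∑' j, ∫ y in A j, F (x₀, y) ∂μ :=
      integral_iUnion hAm hAd (by rw [hAu]; exact hint_inner x₀)
    calc ∫ y, F (x₀, y) ∂μ = ∫ y in K, F (x₀, y) ∂μ := by rw [hres]
      _ = ∫ y in (⋃ i, A i), F (x₀, y) ∂μ := by rw [hAu]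
      _ = ∑' j, ∫ y in A j, F (x₀, y) ∂μ := h1
      _ = ∑ j, G j x₀ := tsum_fintype _
  have hGsm : ∀ j, StronglyMeasurable (G j) := fun j =>
    hFc.stronglyMeasurable.integral_prod_right' (ν := μ.restrict (A j))
  have hGbd : ∀ j, ∀ x ∈ K, ‖G j x‖ ≤ M * c j := by
    intro j x hx
    refine norm_setIntegral_le_of_norm_le_const (measure_lt_top μ _) (fun y hy => ?_)
    rw [Real.norm_eq_abs]
    exact hFbd (x, y) (Set.mk_mem_prod hx (hAK j hy))
  have hGint : ∀ j, Integrable (G j) μ := by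
    intro j
    rw [← hres]
    refine Measure.integrableOn_of_bounded (M := M * c j) (measure_ne_top _ _)
      ((hGsm j).aestronglyMeasurable) ((ae_restrict_iff' hKm).mpr ?_)
    exact Filter.Eventually.of_forall fun x hx => hGbd j x hx
  -- outer decomposition
  have step3 : ∫ x, ∫ y, F (x, y) ∂μ ∂μ = ∑ j, ∑ i, ∫ x in A i, G j x ∂μ := by
    have h1 : ∫ x, ∫ y, F (x, y) ∂μ ∂μ = ∫ x, ∑ j, G j x ∂μ := by
      exact integral_congr_ae (Filter.Eventually.of_forall fun x => step1 x)
    rw [h1, integral_finset_sum _ (fun j _ => hGint j)]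
    refine Finset.sum_congr rfl fun j _ => ?_
    calc ∫ x, G j x ∂μ = ∫ x in (⋃ i, A i), G j x ∂μ := by rw [hAu, hres]
      _ = ∑' i, ∫ x in A i, G j x ∂μ :=
          integral_iUnion hAm hAd ((hGint j).integrableOn)
      _ = ∑ i, ∫ x in A i, G j x ∂μ := tsum_fintype _
  -- per-pair estimate
  have est : ∀ i j, |∫ x in A i, G j x ∂μ - c i * (c j * F (z i, z j))| ≤ ε' * c j * c i := by
    intro i j
    have hKij : ((z i : EuclideanSpace ℝ (Fin D)), (z j : EuclideanSpace ℝ (Fin D))) ∈ K ×ˢ K :=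
      Set.mk_mem_prod (hzK i) (hzK j)
    have inner_est : ∀ x ∈ A i, ‖G j x - c j * F (z i, z j)‖ ≤ ε' * c j := by
      intro x hx
      have hxK : x ∈ K := hAK i hx
      have heq : G j x - c j * F (z i, z j)
          = ∫ y in A j, (F (x, y) - F (z i, z j)) ∂μ := by
        rw [integral_sub ((hint_inner x).mono_set (hAK j)) (integrable_const _),
          setIntegral_const, smul_eq_mul]
        rfl
      rw [heq]
      refine norm_setIntegral_le_of_norm_le_const (measure_lt_top μ _) (fun y hy => ?_)
      have hdist : dist (x, y) ((z i : EuclideanSpace ℝ (Fin D)), (z j : EuclideanSpace ℝ (Fin D))) < δ := by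
        rw [Prod.dist_eq]
        have h1 : dist x (z i) < r := Metric.mem_ball.mp (hAb i hx)
        have h2 : dist y (z j) < r := Metric.mem_ball.mp (hAb j hy)
        have : r < δ := by rw [hrdef]; linarith
        exact max_lt (h1.trans this) (h2.trans this)
      have := hδ (x, y) (Set.mk_mem_prod hxK (hAK j hy)) _ hKij hdist
      rw [Real.dist_eq] at this
      rw [Real.norm_eq_abs]
      exact this.le
    have heq2 : ∫ x in A i, G j x ∂μ - c i * (c j * F (z i, z j))
        = ∫ x in A i, (G j x - c j * F (z i, z j)) ∂μ := by
      rw [integral_sub ((hGint j).integrableOn) (integrable_const _),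
        setIntegral_const, smul_eq_mul]
      rfl
    calc |∫ x in A i, G j x ∂μ - c i * (c j * F (z i, z j))|
        = ‖∫ x in A i, (G j x - c j * F (z i, z j)) ∂μ‖ := by
          rw [heq2, Real.norm_eq_abs]
      _ ≤ ε' * c j * (μ (A i)).toReal :=
          norm_setIntegral_le_of_norm_le_const (measure_lt_top μ _) inner_est
      _ = ε' * c j * c i := rfl
  -- sum of weights
  have hsum_c : ∑ i, c i ≤ T := by
    have h1 : μ (⋃ i, A i) = ∑' i, μ (A i) := measure_iUnion hAd hAm
    have h2 : (∑' i, μ (A i)) = ∑ i, μ (A i) := tsum_fintype _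
    have h3 : ∑ i, c i = (μ K).toReal := by
      rw [hcdef]
      rw [← ENNReal.toReal_sum (fun i _ => measure_ne_top μ _), ← h2, ← h1, hAu]
    rw [h3, hTdef]
    exact ENNReal.toReal_le_toReal (measure_ne_top _ _) (measure_ne_top _ _)
      |>.mpr (measure_mono (Set.subset_univ K))
  -- conclusion
  have hQ : 0 ≤ ∑ i, ∑ j, c i * c j * F (z i, z j) :=
    hFpsd n (fun i => z i) c
  have key : ∑ j, ∑ i, (c i * (c j * F (z i, z j)) - ε' * c j * c i)
      ≤ ∫ x, ∫ y, F (x, y) ∂μ ∂μ := by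
    rw [step3]
    refine Finset.sum_le_sum fun j _ => Finset.sum_le_sum fun i _ => ?_
    have := (abs_le.mp (est i j)).1
    linarith
  set s := ∑ i, c i with hsdef
  have hs0 : 0 ≤ s := Finset.sum_nonneg fun i _ => hc0 i
  have hsplit : ∑ j, ∑ i, (c i * (c j * F (z i, z j)) - ε' * c j * c i)
      = (∑ i, ∑ j, c i * c j * F (z i, z j)) - ε' * (s * s) := by
    have h2 : ε' * (s * s) = ∑ i, ∑ j, ε' * c j * c i := by
      rw [hsdef, Finset.sum_mul_sum, Finset.mul_sum]
      refine Finset.sum_congr rfl fun i _ => ?_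
      rw [Finset.mul_sum]
      exact Finset.sum_congr rfl fun j _ => by ring
    rw [Finset.sum_comm]
    simp only [Finset.sum_sub_distrib]
    rw [h2]
    congr 1
    exact Finset.sum_congr rfl fun i _ => Finset.sum_congr rfl fun j _ => by ring
  have hεbd : ε' * (s * s) ≤ ε := by
    have hss : s * s ≤ T * T := mul_le_mul hsum_c hsum_c hs0 hT0
    have h1 : ε' * (s * s) ≤ ε' * (T * T) := mul_le_mul_of_nonneg_left hss hε'.le
    have h2 : ε' * (T * T) ≤ ε := by
      rw [hε'def, div_mul_eq_mul_div, div_le_iff₀ (by positivity)]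
      nlinarith
    linarith
  rw [hsplit] at key
  linarith

/-- if `k` is a continuous kernel on `ℝ^D` that is positive
semidefinite in the finite-sum sense, `μ` a finite Borel measure with compact
support and `g` a continuous vector field, then
`∬ k(x,y) ⟪g x, g y⟫ dμ(x) dμ(y) ≥ 0`. -/
theorem stmt_8 {D : ℕ}
    (k : EuclideanSpace ℝ (Fin D) × EuclideanSpace ℝ (Fin D) → ℝ)
    (hkc : Continuous k)
    (hk : ∀ (N : ℕ) (x : Fin N → EuclideanSpace ℝ (Fin D)) (c : Fin N → ℝ),
      0 ≤ ∑ i, ∑ j, c i * c j * k (x i, x j))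
    (μ : Measure (EuclideanSpace ℝ (Fin D))) [IsFiniteMeasure μ]
    (K : Set (EuclideanSpace ℝ (Fin D))) (hK : IsCompact K) (hμK : μ Kᶜ = 0)
    (g : EuclideanSpace ℝ (Fin D) → EuclideanSpace ℝ (Fin D)) (hg : Continuous g) :
    0 ≤ ∫ x, ∫ y, k (x, y) * ⟪g x, g y⟫ ∂μ ∂μ := by
  have hFc : Continuous (fun p : EuclideanSpace ℝ (Fin D) × EuclideanSpace ℝ (Fin D) =>
      k p * ⟪g p.1, g p.2⟫) :=
    hkc.mul ((hg.comp continuous_fst).inner (hg.comp continuous_snd))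
  have hFpsd : ∀ (N : ℕ) (x : Fin N → EuclideanSpace ℝ (Fin D)) (c : Fin N → ℝ),
      0 ≤ ∑ i, ∑ j, c i * c j * (k (x i, x j) * ⟪g (x i), g (x j)⟫) := by
    intro N x c
    have h1 : ∀ i j : Fin N, c i * c j * (k (x i, x j) * ⟪g (x i), g (x j)⟫)
        = ∑ d : Fin D, (c i * g (x i) d) * (c j * g (x j) d) * k (x i, x j) := by
      intro i j
      simp only [PiLp.inner_apply, RCLike.inner_apply, conj_trivial, Finset.mul_sum]
      exact Finset.sum_congr rfl fun d _ => by ring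
    calc (0:ℝ) ≤ ∑ d : Fin D, ∑ i, ∑ j, (c i * g (x i) d) * (c j * g (x j) d) * k (x i, x j) :=
          Finset.sum_nonneg fun d _ => hk N x (fun i => c i * g (x i) d)
      _ = ∑ i, ∑ d : Fin D, ∑ j, (c i * g (x i) d) * (c j * g (x j) d) * k (x i, x j) :=
          Finset.sum_comm
      _ = ∑ i, ∑ j, ∑ d : Fin D, (c i * g (x i) d) * (c j * g (x j) d) * k (x i, x j) :=
          Finset.sum_congr rfl fun i _ => Finset.sum_comm
      _ = ∑ i, ∑ j, c i * c j * (k (x i, x j) * ⟪g (x i), g (x j)⟫) :=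
          Finset.sum_congr rfl fun i _ => Finset.sum_congr rfl fun j _ => (h1 i j).symm
  exact stmt8_aux (fun p => k p * ⟪g p.1, g p.2⟫) hFc hFpsd μ K hK hμK
end
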